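/- Let γ ≠ 0. The function σ(x) = (3/(2γ)) sech²(x/2) satisfies the KdV traveling wave equation -σ''(x) + σ(x) - γ σ(x)² = 0 for all x ∈ ℝ. Moreover, if v : ℝ → ℝ is twice continuously differentiable, even, not identically zero, tends to 0 as |x| → ∞, and satisfies -v''(x) + v(x) - γ v(x)² = 0 for all x, then v = σ. -/

import Mathlib

open MeasureTheory Filter Topology

open Set in
/-- The KdV solitary wave profile `σ(x) = (3/(2γ)) sech²(x/2)`. -/
noncomputable def sigma (γ : ℝ) (x : ℝ) : ℝ := 3 / (2 * γ) * ((Real.cosh (x / 2))⁻¹) ^ 2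

open Set

noncomputable def sigma' (γ : ℝ) (x : ℝ) : ℝ :=
  -(3 / (2 * γ)) * Real.sinh (x / 2) * ((Real.cosh (x / 2))⁻¹) ^ 3

lemma cosh_half_ne (x : ℝ) : Real.cosh (x / 2) ≠ 0 := (Real.cosh_pos (x := x/2)).ne'

lemma hasDerivAt_half (x : ℝ) : HasDerivAt (fun y : ℝ => y / 2) (1 / 2) x := by
  simpa using (hasDerivAt_id x).div_const 2

lemma hasDerivAt_cosh_half (x : ℝ) :
    HasDerivAt (fun y : ℝ => Real.cosh (y / 2)) (Real.sinh (x / 2) / 2) x := by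
  have := (Real.hasDerivAt_cosh (x / 2)).comp x (hasDerivAt_half x)
  simpa [div_eq_mul_inv, mul_comm, Function.comp_def] using this

lemma hasDerivAt_sigma (γ : ℝ) (x : ℝ) : HasDerivAt (sigma γ) (sigma' γ x) x := by
  have h1 := ((hasDerivAt_cosh_half x).fun_inv (cosh_half_ne x)).fun_pow 2
  have h2 := h1.const_mul (3 / (2 * γ))
  refine h2.congr_deriv (Eq.symm ?_)
  have hc := cosh_half_ne x
  simp only [sigma', Nat.add_one_sub_one, pow_one, Nat.cast_ofNat]
  field_simp

lemma hasDerivAt_sigma' (γ : ℝ) (hγ : γ ≠ 0) (x : ℝ) :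
    HasDerivAt (sigma' γ) (sigma γ x - γ * (sigma γ x) ^ 2) x := by
  have hs : HasDerivAt (fun y : ℝ => Real.sinh (y / 2)) (Real.cosh (x / 2) / 2) x := by
    have := (Real.hasDerivAt_sinh (x / 2)).comp x (hasDerivAt_half x)
    simpa [div_eq_mul_inv, mul_comm, Function.comp_def] using this
  have h1 := ((hasDerivAt_cosh_half x).fun_inv (cosh_half_ne x)).fun_pow 3
  have h2 := (hs.fun_mul h1).const_mul (-(3 / (2 * γ)))
  have heq : (fun y => -(3 / (2 * γ)) * (Real.sinh (y / 2) * ((Real.cosh (y / 2))⁻¹) ^ 3))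
      = sigma' γ := by
    funext y; unfold sigma'; ring
  rw [heq] at h2
  refine h2.congr_deriv (Eq.symm ?_)
  have hsq : Real.sinh (x / 2) ^ 2 = Real.cosh (x / 2) ^ 2 - 1 := Real.sinh_sq (x / 2)
  have hc := cosh_half_ne x
  simp only [sigma, Nat.add_one_sub_one, Nat.cast_ofNat]
  field_simp
  linear_combination (-3:ℝ) * hsq

lemma sigma_solves (γ : ℝ) (hγ : γ ≠ 0) (x : ℝ) :
    -deriv (deriv (sigma γ)) x + sigma γ x - γ * (sigma γ x) ^ 2 = 0 := by
  have hd : deriv (sigma γ) = sigma' γ := funext fun y => (hasDerivAt_sigma γ y).deriv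
  rw [hd, (hasDerivAt_sigma' γ hγ x).deriv]
  ring


lemma abs_sinh_le_cosh (y : ℝ) : |Real.sinh y| ≤ Real.cosh y := by
  rw [Real.abs_sinh, ← Real.cosh_abs]
  nlinarith [Real.cosh_sub_sinh |y|, Real.exp_pos (-|y|)]

lemma inv_cosh_le_one (y : ℝ) : (Real.cosh y)⁻¹ ≤ 1 :=
  inv_le_one_of_one_le₀ (Real.one_le_cosh y)

lemma inv_cosh_pos (y : ℝ) : 0 < (Real.cosh y)⁻¹ := inv_pos.mpr (Real.cosh_pos (x := y))

lemma sigma_bound (γ x : ℝ) : |sigma γ x| ≤ |3 / (2 * γ)| := by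
  have h1 := inv_cosh_le_one (x / 2)
  have h2 := inv_cosh_pos (x / 2)
  rw [sigma, abs_mul]
  have : |((Real.cosh (x / 2))⁻¹) ^ 2| ≤ 1 := by
    rw [abs_of_nonneg (by positivity)]; nlinarith
  nlinarith [abs_nonneg (3 / (2 * γ))]

lemma sigma'_bound (γ x : ℝ) : |sigma' γ x| ≤ |3 / (2 * γ)| := by
  have h1 := inv_cosh_le_one (x / 2)
  have h2 := inv_cosh_pos (x / 2)
  have h3 := abs_sinh_le_cosh (x / 2)
  have h4 : (Real.cosh (x / 2))⁻¹ * Real.cosh (x / 2) = 1 :=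
    inv_mul_cancel₀ (Real.cosh_pos (x := x / 2)).ne'
  have : |Real.sinh (x / 2) * ((Real.cosh (x / 2))⁻¹) ^ 3| ≤ 1 := by
    rw [abs_mul, abs_of_nonneg (by positivity : (0:ℝ) ≤ ((Real.cosh (x / 2))⁻¹) ^ 3)]
    calc |Real.sinh (x / 2)| * ((Real.cosh (x / 2))⁻¹) ^ 3
        ≤ Real.cosh (x / 2) * ((Real.cosh (x / 2))⁻¹) ^ 3 :=
          mul_le_mul_of_nonneg_right h3 (by positivity)
      _ = ((Real.cosh (x / 2))⁻¹) ^ 2 * ((Real.cosh (x / 2))⁻¹ * Real.cosh (x / 2)) := by ring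
      _ = ((Real.cosh (x / 2))⁻¹) ^ 2 := by rw [h4, mul_one]
      _ ≤ 1 := by nlinarith
  calc |sigma' γ x| = |3 / (2 * γ)| * |Real.sinh (x / 2) * ((Real.cosh (x / 2))⁻¹) ^ 3| := by
        rw [sigma', mul_assoc, abs_mul, abs_neg]
    _ ≤ |3 / (2 * γ)| * 1 := by
        exact mul_le_mul_of_nonneg_left this (abs_nonneg _)
    _ = |3 / (2 * γ)| := mul_one _

/-- A function with derivative bounded below by `δ > 0` on `[M, ∞)` cannot tend to `0`. -/
lemma no_escape (u du : ℝ → ℝ) (hu : ∀ x, HasDerivAt u (du x) x)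
    (hlim : Tendsto u atTop (nhds 0)) (δ M : ℝ) (hδ : 0 < δ)
    (h : ∀ x ≥ M, δ ≤ du x) : False := by
  have hu2 : ∀ x : ℝ, HasDerivAt (fun y => u y - δ * y) (du x - δ) x := by
    intro x
    simpa using (hu x).fun_sub (((hasDerivAt_id x).const_mul δ))
  have hmono : MonotoneOn (fun y => u y - δ * y) (Ici M) := by
    apply monotoneOn_of_deriv_nonneg (convex_Ici M)
    · exact (Differentiable.continuous fun x => (hu2 x).differentiableAt).continuousOn
    · exact fun x _ => ((hu2 x).differentiableAt).differentiableWithinAt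
    · intro x hx
      rw [(hu2 x).deriv]
      rw [interior_Ici] at hx
      linarith [h x (le_of_lt hx)]
  obtain ⟨N, hN⟩ : ∃ N, ∀ x ≥ N, u x < 1 := by
    have := hlim.eventually (eventually_lt_nhds (by norm_num : (0:ℝ) < 1))
    exact eventually_atTop.mp this
  set a := u M - δ * M with ha
  set x0 := max M (max N ((1 - a) / δ + 1)) with hx0
  have hx0M : M ≤ x0 := le_max_left _ _
  have hx0N : N ≤ x0 := le_trans (le_max_left _ _) (le_max_right _ _)
  have hx0a : (1 - a) / δ + 1 ≤ x0 := le_trans (le_max_right _ _) (le_max_right _ _)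
  have hm := hmono (mem_Ici.mpr (le_refl M)) (mem_Ici.mpr hx0M) hx0M
  have h1 : u x0 < 1 := hN x0 hx0N
  have hm' : u M - δ * M ≤ u x0 - δ * x0 := by simpa using hm
  have h5 : δ * ((1 - a) / δ + 1) ≤ δ * x0 := mul_le_mul_of_nonneg_left hx0a hδ.le
  have h6 : δ * ((1 - a) / δ + 1) = 1 - a + δ := by field_simp
  linarith

/-- Uniqueness for the first-order system associated to `-v'' + v - γv² = 0`. -/
lemma ode_unique (γ R : ℝ) (hR : 0 ≤ R) (f g : ℝ → ℝ × ℝ)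
    (hf : ∀ t, HasDerivAt f ((f t).2, (f t).1 - γ * (f t).1 ^ 2) t)
    (hg : ∀ t, HasDerivAt g ((g t).2, (g t).1 - γ * (g t).1 ^ 2) t)
    (hfR : ∀ t, ‖f t‖ ≤ R) (hgR : ∀ t, ‖g t‖ ≤ R) (h0 : f 0 = g 0) : f = g := by
  set F : ℝ × ℝ → ℝ × ℝ := fun p => (p.2, p.1 - γ * p.1 ^ 2) with hF
  set K : NNReal := ⟨1 + 2 * |γ| * R, by positivity⟩ with hK
  have hlip : LipschitzOnWith K F (Metric.closedBall (0 : ℝ × ℝ) R) := by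
    rw [lipschitzOnWith_iff_dist_le_mul]
    intro p hp q hq
    rw [mem_closedBall_zero_iff, Prod.norm_def] at hp hq
    have hp1 : |p.1| ≤ R := le_trans (le_max_left _ _) hp
    have hq1 : |q.1| ≤ R := le_trans (le_max_left _ _) hq
    have hd : dist (F p) (F q)
        = max |p.2 - q.2| |(p.1 - γ * p.1 ^ 2) - (q.1 - γ * q.1 ^ 2)| := by
      simp [hF, Prod.dist_eq, Real.dist_eq]
      congr 2
      ring
    have hd2 : dist p q = max |p.1 - q.1| |p.2 - q.2| := by simp [Prod.dist_eq, Real.dist_eq]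
    have hKc : (K : ℝ) = 1 + 2 * |γ| * R := rfl
    rw [hd, hd2, hKc]
    have hK1 : (1:ℝ) ≤ 1 + 2 * |γ| * R := by nlinarith [mul_nonneg (abs_nonneg γ) hR]
    have hmax1 : |p.1 - q.1| ≤ max |p.1 - q.1| |p.2 - q.2| := le_max_left _ _
    have hmax2 : |p.2 - q.2| ≤ max |p.1 - q.1| |p.2 - q.2| := le_max_right _ _
    have hmaxnn : (0:ℝ) ≤ max |p.1 - q.1| |p.2 - q.2| := le_trans (abs_nonneg _) hmax1
    apply max_le
    · nlinarith
    ·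
      have he : p.1 - γ * p.1 ^ 2 - (q.1 - γ * q.1 ^ 2)
          = (p.1 - q.1) - γ * (p.1 + q.1) * (p.1 - q.1) := by ring
      rw [he]
      have h1 : |(p.1 - q.1) - γ * (p.1 + q.1) * (p.1 - q.1)|
          ≤ |p.1 - q.1| + |γ| * |p.1 + q.1| * |p.1 - q.1| := by
        refine le_trans (abs_sub _ _) ?_
        rw [abs_mul, abs_mul]
      have h2 : |p.1 + q.1| ≤ 2 * R := by
        calc |p.1 + q.1| ≤ |p.1| + |q.1| := abs_add_le _ _
          _ ≤ 2 * R := by linarith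
      nlinarith [abs_nonneg (p.1 - q.1), abs_nonneg γ, abs_nonneg (p.1 + q.1),
        mul_le_mul_of_nonneg_left h2 (abs_nonneg γ),
        mul_le_mul_of_nonneg_right (mul_le_mul_of_nonneg_left h2 (abs_nonneg γ)) (abs_nonneg (p.1 - q.1)),
        mul_le_mul_of_nonneg_left hmax1 (by positivity : (0:ℝ) ≤ 2 * |γ| * R)]
  funext x
  have hT : x ∈ Ioo (-(|x| + 1)) (|x| + 1) := by
    constructor <;> cases abs_cases x <;> linarith
  have h0T : (0:ℝ) ∈ Ioo (-(|x| + 1)) (|x| + 1) := by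
    constructor <;> [linarith [abs_nonneg x]; linarith [abs_nonneg x]]
  exact ODE_solution_unique_of_mem_Ioo (v := fun _ => F)
    (s := fun _ => Metric.closedBall (0 : ℝ × ℝ) R) (fun _ _ => hlip) h0T
    (fun t _ => ⟨hf t, mem_closedBall_zero_iff.mpr (hfR t)⟩)
    (fun t _ => ⟨hg t, mem_closedBall_zero_iff.mpr (hgR t)⟩) h0 hT

/-- `σ(x) = (3/(2γ)) sech²(x/2)` solves the KdV traveling wave equation
`-σ'' + σ - γσ² = 0`, and it is the unique even, nontrivial, decaying `C²` solution. -/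
theorem kdv_soliton_unique (γ : ℝ) (hγ : γ ≠ 0) :
    (∀ x : ℝ, -deriv (deriv (sigma γ)) x + sigma γ x - γ * (sigma γ x) ^ 2 = 0) ∧
    (∀ v : ℝ → ℝ, ContDiff ℝ 2 v → (∀ x : ℝ, v (-x) = v x) → v ≠ 0 →
      Tendsto v atTop (nhds 0) → Tendsto v atBot (nhds 0) →
      (∀ x : ℝ, -deriv (deriv v) x + v x - γ * (v x) ^ 2 = 0) →
      v = sigma γ) := by
  constructor
  · exact sigma_solves γ hγ
  intro v hv heven hvne hvtop hvbot heq
  -- basic differentiability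
  have hv' : ContDiff ℝ 1 (deriv v) := by
    have h2 : ContDiff ℝ (1 + 1) v := by
      rw [show ((1 : WithTop ℕ∞) + 1) = 2 by norm_num]; exact hv
    exact (contDiff_succ_iff_deriv.mp h2).2.2
  have hvdiff : Differentiable ℝ v := hv.differentiable (by norm_num)
  set w := deriv v with hwdef
  have hdv : ∀ x, HasDerivAt v (w x) x := fun x => (hvdiff x).hasDerivAt
  have hwdiff : Differentiable ℝ w := hv'.differentiable (by norm_num)
  have hv2 : ∀ x, deriv w x = v x - γ * v x ^ 2 := fun x => by linarith [heq x]
  have hdw : ∀ x, HasDerivAt w (v x - γ * v x ^ 2) x := fun x => by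
    rw [← hv2 x]; exact (hwdiff x).hasDerivAt
  have hwcont : Continuous w := hwdiff.continuous
  -- w is odd, so w 0 = 0
  have hodd : ∀ x, w (-x) = -w x := by
    intro x
    have h1 : HasDerivAt (v ∘ fun y : ℝ => -y) (w (-x) * (-1)) x :=
      (hdv (-x)).comp x (hasDerivAt_neg x)
    have h2 : HasDerivAt (v ∘ fun y : ℝ => -y) (w x) x := by
      have hvc : (v ∘ fun y : ℝ => -y) = v := funext fun y => heven y
      rw [hvc]; exact hdv x
    have := h1.unique h2
    linarith
  have hw0 : w 0 = 0 := by
    have h := hodd 0; rw [neg_zero] at h; linarith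
  -- energy
  set E : ℝ → ℝ := fun x => w x ^ 2 / 2 - v x ^ 2 / 2 + γ * v x ^ 3 / 3 with hE
  have hdE : ∀ x, HasDerivAt E 0 x := by
    intro x
    have h1 : HasDerivAt (fun y => w y ^ 2 / 2) (w x * (v x - γ * v x ^ 2)) x := by
      have := ((hdw x).fun_pow 2).div_const 2
      refine this.congr_deriv (Eq.symm ?_); push_cast; ring
    have h2 : HasDerivAt (fun y => v y ^ 2 / 2) (v x * w x) x := by
      have := ((hdv x).fun_pow 2).div_const 2
      refine this.congr_deriv (Eq.symm ?_); push_cast; ring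
    have h3 : HasDerivAt (fun y => γ * v y ^ 3 / 3) (γ * v x ^ 2 * w x) x := by
      have := (((hdv x).fun_pow 3).const_mul γ).div_const 3
      refine this.congr_deriv (Eq.symm ?_); push_cast; ring
    have h4 := (h1.sub h2).add h3
    refine h4.congr_deriv (Eq.symm ?_)
    ring
  have hEc : ∀ x, E x = E 0 :=
    fun x => is_const_of_deriv_eq_zero (fun y => (hdE y).differentiableAt)
      (fun y => (hdE y).deriv) x 0
  set e := E 0 with hee
  have hkey : ∀ x, w x ^ 2 = 2 * e + v x ^ 2 - 2 * γ / 3 * v x ^ 3 := by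
    intro x
    have h := hEc x
    simp only [hE] at h
    linarith
  have he0 : e = -v 0 ^ 2 / 2 + γ * v 0 ^ 3 / 3 := by
    rw [hee]; simp only [hE]; rw [hw0]; ring
  -- the energy constant is zero
  have hlim : Tendsto (fun x => w x ^ 2) atTop (nhds (2 * e)) := by
    have hcont : Continuous fun t : ℝ => 2 * e + t ^ 2 - 2 * γ / 3 * t ^ 3 := by fun_prop
    have h := (hcont.tendsto 0).comp hvtop
    simp only [Function.comp_def] at h
    norm_num at h
    exact h.congr fun x => (hkey x).symm
  have he_nonneg : (0:ℝ) ≤ 2 * e :=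
    ge_of_tendsto hlim (Eventually.of_forall fun x => sq_nonneg _)
  have he_nonpos : e ≤ 0 := by
    by_contra hpos
    push_neg at hpos
    set δ := Real.sqrt e with hδdef
    have hδpos : 0 < δ := Real.sqrt_pos.mpr hpos
    obtain ⟨M, hM⟩ : ∃ M, ∀ x ≥ M, e < w x ^ 2 :=
      eventually_atTop.mp (hlim.eventually (eventually_gt_nhds (by linarith)))
    have habs : ∀ x ≥ M, δ < |w x| := by
      intro x hx
      have h1 : δ < Real.sqrt (w x ^ 2) := by
        rw [hδdef]
        exact Real.sqrt_lt_sqrt hpos.le (hM x hx)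
      rwa [Real.sqrt_sq_eq_abs] at h1
    have hne : ∀ x ≥ M, w x ≠ 0 := by
      intro x hx h0
      have := habs x hx
      rw [h0, abs_zero] at this
      linarith
    rcases lt_or_gt_of_ne (hne M (le_refl M)) with hneg | hposM
    · have hallneg : ∀ x ≥ M, w x < 0 := by
        intro x hx
        rcases lt_or_ge (w x) 0 with h | h
        · exact h
        exfalso
        obtain ⟨c, hcmem, hceq⟩ :=
          intermediate_value_Icc hx hwcont.continuousOn ⟨hneg.le, h⟩
        exact hne c hcmem.1 hceq
      refine no_escape (fun x => -v x) (fun x => -w x) (fun x => (hdv x).neg)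
        (by simpa using hvtop.neg) δ M hδpos fun x hx => ?_
      have := habs x hx
      rw [abs_of_neg (hallneg x hx)] at this
      show δ ≤ -w x
      linarith
    · have hallpos : ∀ x ≥ M, 0 < w x := by
        intro x hx
        rcases lt_or_ge 0 (w x) with h | h
        · exact h
        exfalso
        obtain ⟨c, hcmem, hceq⟩ :=
          intermediate_value_Icc' hx hwcont.continuousOn ⟨h, hposM.le⟩
        exact hne c hcmem.1 hceq
      refine no_escape v w hdv hvtop δ M hδpos fun x hx => ?_
      have := habs x hx
      rw [abs_of_pos (hallpos x hx)] at this
      linarith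
  have hez : e = 0 := le_antisymm he_nonpos (by linarith)
  -- value at 0
  have hv0 : v 0 = 0 ∨ v 0 = 3 / (2 * γ) := by
    have h : v 0 ^ 2 * (3 - 2 * γ * v 0) = 0 := by
      rw [hez] at he0; nlinarith [he0]
    rcases mul_eq_zero.mp h with h1 | h1
    · left; exact pow_eq_zero_iff (by norm_num) |>.mp h1
    · right; field_simp; linarith
  -- bounds
  obtain ⟨Cv, hCv, hCvnn⟩ : ∃ C, (∀ x, |v x| ≤ C) ∧ 0 ≤ C := by
    have hA' : ∀ᶠ x in atTop, |v x| < 1 := by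
      have := Metric.tendsto_nhds.mp hvtop 1 one_pos
      simpa [Real.dist_eq] using this
    have hB' : ∀ᶠ x in atBot, |v x| < 1 := by
      have := Metric.tendsto_nhds.mp hvbot 1 one_pos
      simpa [Real.dist_eq] using this
    obtain ⟨A, hA⟩ := eventually_atTop.mp hA'
    obtain ⟨B, hB⟩ := eventually_atBot.mp hB'
    obtain ⟨C, hC⟩ := (isCompact_Icc (a := B) (b := A)).exists_bound_of_continuousOn
      hvdiff.continuous.continuousOn
    refine ⟨max C 1, fun x => ?_, le_trans zero_le_one (le_max_right _ _)⟩
    rcases le_total A x with h | h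
    · exact le_trans (hA x h).le (le_max_right _ _)
    rcases le_total x B with h' | h'
    · exact le_trans (hB x h').le (le_max_right _ _)
    · exact le_trans (hC x ⟨h', h⟩) (le_max_left _ _)
  have habs23 : ∀ y : ℝ, |2 * γ / 3 * y ^ 3| = 2 * |γ| / 3 * |y| ^ 3 := by
    intro y
    rw [abs_mul, abs_div, abs_mul, abs_pow]
    norm_num
  have hCw : ∀ x, |w x| ≤ Real.sqrt (Cv ^ 2 + 2 * |γ| / 3 * Cv ^ 3) := by
    intro x
    have hk := hkey x
    rw [hez] at hk
    have h2 : |v x| ^ 2 ≤ Cv ^ 2 := pow_le_pow_left₀ (abs_nonneg _) (hCv x) 2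
    have h4 : |v x| ^ 3 ≤ Cv ^ 3 := pow_le_pow_left₀ (abs_nonneg _) (hCv x) 3
    have h1 : w x ^ 2 ≤ Cv ^ 2 + 2 * |γ| / 3 * Cv ^ 3 := by
      have h5 : 2 * |γ| / 3 * |v x| ^ 3 ≤ 2 * |γ| / 3 * Cv ^ 3 :=
        mul_le_mul_of_nonneg_left h4 (by positivity)
      have h6 := neg_abs_le (2 * γ / 3 * v x ^ 3)
      have h7 := habs23 (v x)
      have h8 : v x ^ 2 = |v x| ^ 2 := (sq_abs _).symm
      linarith [h2, h5]
    calc |w x| = Real.sqrt (w x ^ 2) := (Real.sqrt_sq_eq_abs _).symm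
      _ ≤ _ := Real.sqrt_le_sqrt h1
  set Cw := Real.sqrt (Cv ^ 2 + 2 * |γ| / 3 * Cv ^ 3) with hCwdef
  set R := max Cv (max Cw |3 / (2 * γ)|) with hRdef
  have hRnn : 0 ≤ R := le_trans hCvnn (le_max_left _ _)
  have hfR : ∀ t, ‖((v t, w t) : ℝ × ℝ)‖ ≤ R := by
    intro t
    rw [Prod.norm_def]
    apply max_le
    · exact le_trans (hCv t) (le_max_left _ _)
    · exact le_trans (hCw t) (le_trans (le_max_left _ _) (le_max_right _ _))
  have hgR : ∀ t, ‖((sigma γ t, sigma' γ t) : ℝ × ℝ)‖ ≤ R := by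
    intro t
    rw [Prod.norm_def]
    apply max_le
    · exact le_trans (sigma_bound γ t) (le_trans (le_max_right _ _) (le_max_right _ _))
    · exact le_trans (sigma'_bound γ t) (le_trans (le_max_right _ _) (le_max_right _ _))
  have hf : ∀ t, HasDerivAt (fun t => ((v t, w t) : ℝ × ℝ)) ((w t, v t - γ * v t ^ 2)) t :=
    fun t => (hdv t).prodMk (hdw t)
  rcases hv0 with h0 | h0
  · exfalso
    have hzero := ode_unique γ R hRnn (fun t => (v t, w t)) (fun _ => (0, 0))
      (fun t => hf t)
      (fun t => by
        have := hasDerivAt_const t ((0, 0) : ℝ × ℝ)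
        refine this.congr_deriv (Eq.symm ?_)
        norm_num)
      hfR
      (fun t => by
        rw [Prod.norm_def]
        simp [hRnn])
      (by simp [h0, hw0])
    apply hvne
    funext x
    have hx := congrFun hzero x
    simpa using congrArg Prod.fst hx
  · have hgd : ∀ t, HasDerivAt (fun t => ((sigma γ t, sigma' γ t) : ℝ × ℝ))
        ((sigma' γ t, sigma γ t - γ * sigma γ t ^ 2)) t :=
      fun t => (hasDerivAt_sigma γ t).prodMk (hasDerivAt_sigma' γ hγ t)
    have hσ0 : sigma γ 0 = 3 / (2 * γ) := by simp [sigma]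
    have hσ'0 : sigma' γ 0 = 0 := by simp [sigma']
    have hsame := ode_unique γ R hRnn (fun t => (v t, w t))
      (fun t => (sigma γ t, sigma' γ t))
      (fun t => hf t) (fun t => hgd t) hfR hgR
      (by rw [Prod.ext_iff]; exact ⟨by simpa [hσ0] using h0, by simp [hσ'0, hw0]⟩)
    funext x
    exact congrArg Prod.fst (congrFun hsame x)
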